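/- Fix n ≥ 1 and p = n+1, and let f : (ZMod n)² → ZMod (n²) be the position map f(t,g) = (n+1)(gn + i) mod n², where i is the representative of t − g in {0,…,n−1}. Then for all t, g, the block index of f(t,g) is t, i.e., ⌊f(t,g)/n⌋ ≡ t (mod n), taking the canonical representative of f(t,g) in {0,…,n²−1}. -/

import Mathlib

/-- The position `f(t,g) = (n+1)(g·n + i) mod n²`, with `i` the representative of
`t - g` in `{0,…,n-1}`, lies in Block `t`: its quotient upon division by `n` is
congruent to `t` mod `n`. -/
theorem stmt_14 (n : ℕ) (hn : 1 ≤ n) (t g : ZMod n) :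
    ((((((n + 1) * (g.val * n + (t - g).val) : ℕ) : ZMod (n ^ 2)).val / n : ℕ) : ZMod n)) = t := by
  haveI : NeZero n := ⟨by omega⟩
  haveI : NeZero (n ^ 2) := ⟨by positivity⟩
  set a := g.val with ha'
  set i := (t - g).val with hi'
  have ha : a < n := ZMod.val_lt g
  have hi : i < n := ZMod.val_lt (t - g)
  have hval : (((((n + 1) * (a * n + i) : ℕ) : ZMod (n ^ 2))).val)
      = ((n + 1) * (a * n + i)) % n ^ 2 := ZMod.val_natCast _ _
  have hmod : ((n + 1) * (a * n + i)) % n ^ 2 = ((a + i) % n) * n + i := by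
    have h1 : (n + 1) * (a * n + i) = (a + i) * n + i + a * (n * n) := by ring
    rw [pow_two, h1, Nat.add_mul_mod_self_right]
    rcases lt_or_ge (a + i) n with h | h
    · rw [Nat.mod_eq_of_lt (by nlinarith), Nat.mod_eq_of_lt h]
    · obtain ⟨m, hm, hmlt⟩ : ∃ m, a + i = m + n ∧ m < n := ⟨a + i - n, by omega, by omega⟩
      have h2 : (a + i) * n + i = n * n + (m * n + i) := by rw [hm]; ring
      have h3 : (a + i) % n = m := by
        rw [hm, Nat.add_mod_right, Nat.mod_eq_of_lt hmlt]
      rw [h2, Nat.add_mod_left, h3, Nat.mod_eq_of_lt (by nlinarith)]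
  have hdiv : (((a + i) % n) * n + i) / n = (a + i) % n := by
    rw [mul_comm, Nat.mul_add_div (by omega), Nat.div_eq_of_lt hi, Nat.add_zero]
  rw [hval, hmod, hdiv, ZMod.natCast_mod]
  push_cast
  simp [ha', hi', ZMod.natCast_val, ZMod.natCast_self]
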